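/- Let u, v be vectors in a real inner product space with u ≠ 0, let v⊥ := v − (⟨v, u⟩/‖u‖²)·u be the component of v orthogonal to u, and assume ‖v⊥‖ ≥ δ for some δ > 0. Then for all α, α̂ ∈ ℝ, the vectors α̂·u − v and α·u − v are nonzero and the angle between them, arccos(⟨α̂·u − v, α·u − v⟩/(‖α̂·u − v‖·‖α·u − v‖)), is at most |α̂ − α|·‖u‖/δ. -/

import Mathlib

open scoped RealInnerProductSpace

lemma arctan_lipschitz (a b : ℝ) : |Real.arctan a - Real.arctan b| ≤ |a - b| := by
  have h := Convex.norm_image_sub_le_of_norm_hasDerivWithin_le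
    (f := Real.arctan) (f' := fun x => 1 / (1 + x ^ 2)) (s := Set.univ) (C := 1)
    (fun x _ => (Real.hasDerivAt_arctan x).hasDerivWithinAt)
    (fun x _ => by
      rw [Real.norm_eq_abs, abs_of_nonneg (by positivity)]
      rw [div_le_one (by positivity)]
      nlinarith [sq_nonneg x])
    convex_univ (Set.mem_univ b) (Set.mem_univ a)
  simpa using h

lemma aux_cos (p q r : ℝ) (hr : 0 < r) :
    (p * q + r ^ 2) / (Real.sqrt (p ^ 2 + r ^ 2) * Real.sqrt (q ^ 2 + r ^ 2))
      = Real.cos (Real.arctan (p / r) - Real.arctan (q / r)) := by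
  have hP : (0:ℝ) < Real.sqrt (p ^ 2 + r ^ 2) := Real.sqrt_pos.2 (by positivity)
  have hQ : (0:ℝ) < Real.sqrt (q ^ 2 + r ^ 2) := Real.sqrt_pos.2 (by positivity)
  have hp : Real.sqrt (1 + (p / r) ^ 2) = Real.sqrt (p ^ 2 + r ^ 2) / r := by
    rw [show 1 + (p / r) ^ 2 = (p ^ 2 + r ^ 2) / r ^ 2 by field_simp; ring,
      Real.sqrt_div' _ (by positivity)]
    rw [Real.sqrt_sq hr.le]
  have hq : Real.sqrt (1 + (q / r) ^ 2) = Real.sqrt (q ^ 2 + r ^ 2) / r := by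
    rw [show 1 + (q / r) ^ 2 = (q ^ 2 + r ^ 2) / r ^ 2 by field_simp; ring,
      Real.sqrt_div' _ (by positivity)]
    rw [Real.sqrt_sq hr.le]
  rw [Real.cos_sub, Real.cos_arctan, Real.sin_arctan, Real.cos_arctan, Real.sin_arctan,
    hp, hq]
  field_simp
  ring

/-- Perturbing the coefficient α in α·u − v rotates the vector by
an angle at most |α̂ − α|·‖u‖/δ, provided the component of v orthogonal to u has
norm at least δ. -/
theorem stmt6 {E : Type*} [NormedAddCommGroup E] [InnerProductSpace ℝ E]
    (u v : E) (hu : u ≠ 0) (δ : ℝ) (hδ : 0 < δ)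
    (hperp : δ ≤ ‖v - (⟪v, u⟫ / ‖u‖ ^ 2) • u‖) :
    ∀ α αhat : ℝ,
      αhat • u - v ≠ 0 ∧ α • u - v ≠ 0 ∧
      Real.arccos (⟪αhat • u - v, α • u - v⟫ / (‖αhat • u - v‖ * ‖α • u - v‖))
        ≤ |αhat - α| * ‖u‖ / δ := by
  intro α αhat
  set c : ℝ := ⟪v, u⟫ / ‖u‖ ^ 2 with hc
  set w : E := v - c • u with hwdef
  have hr : 0 < ‖w‖ := lt_of_lt_of_le hδ hperp
  have hu2 : (‖u‖ : ℝ) ^ 2 ≠ 0 := pow_ne_zero 2 (norm_ne_zero_iff.2 hu)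
  have hw0 : ⟪u, w⟫ = 0 := by
    rw [hwdef, inner_sub_right, real_inner_smul_right, hc, real_inner_comm v u,
      real_inner_self_eq_norm_sq]
    field_simp
    ring
  have key : ∀ s : ℝ, s • u - v = (s - c) • u - w := by
    intro s; rw [hwdef]; module
  have hnorm : ∀ s : ℝ, ‖s • u - w‖ = Real.sqrt ((s * ‖u‖) ^ 2 + ‖w‖ ^ 2) := by
    intro s
    rw [← Real.sqrt_sq (norm_nonneg (s • u - w))]
    congr 1
    rw [norm_sub_sq_real, real_inner_smul_left, hw0, norm_smul]
    simp only [mul_pow, sq_abs, mul_zero, sub_zero, Real.norm_eq_abs]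
  have hw0' : ⟪w, u⟫ = 0 := by rw [real_inner_comm]; exact hw0
  have hinner : ∀ s t : ℝ,
      ⟪s • u - w, t • u - w⟫ = (s * ‖u‖) * (t * ‖u‖) + ‖w‖ ^ 2 := by
    intro s t
    simp only [inner_sub_left, inner_sub_right, real_inner_smul_left,
      real_inner_smul_right, hw0, hw0',
      real_inner_self_eq_norm_sq, mul_zero, sub_zero, zero_sub]
    ring
  have hne : ∀ s : ℝ, s • u - v ≠ 0 := by
    intro s h
    have h2 : ‖s • u - v‖ = 0 := by rw [h, norm_zero]
    rw [key s, hnorm] at h2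
    have := Real.sqrt_eq_zero (by positivity) |>.mp h2
    nlinarith [sq_nonneg ((s - c) * ‖u‖)]
  refine ⟨hne αhat, hne α, ?_⟩
  rw [key α, key αhat, hinner, hnorm, hnorm,
    aux_cos ((αhat - c) * ‖u‖) ((α - c) * ‖u‖) ‖w‖ hr]
  set a := Real.arctan ((αhat - c) * ‖u‖ / ‖w‖)
  set b := Real.arctan ((α - c) * ‖u‖ / ‖w‖)
  have hbnd : |a - b| ≤ Real.pi := by
    have ha1 := Real.arctan_lt_pi_div_two ((αhat - c) * ‖u‖ / ‖w‖)
    have ha2 := Real.neg_pi_div_two_lt_arctan ((αhat - c) * ‖u‖ / ‖w‖)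
    have hb1 := Real.arctan_lt_pi_div_two ((α - c) * ‖u‖ / ‖w‖)
    have hb2 := Real.neg_pi_div_two_lt_arctan ((α - c) * ‖u‖ / ‖w‖)
    rw [abs_sub_le_iff]
    constructor <;> nlinarith
  have harccos : Real.arccos (Real.cos (a - b)) = |a - b| := by
    rw [← Real.cos_abs (a - b), Real.arccos_cos (abs_nonneg _) hbnd]
  rw [harccos]
  have hlip := arctan_lipschitz ((αhat - c) * ‖u‖ / ‖w‖) ((α - c) * ‖u‖ / ‖w‖)
  have heq : |(αhat - c) * ‖u‖ / ‖w‖ - (α - c) * ‖u‖ / ‖w‖|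
      = |αhat - α| * ‖u‖ / ‖w‖ := by
    rw [div_sub_div_same, abs_div, abs_of_pos hr, show (αhat - c) * ‖u‖ - (α - c) * ‖u‖
      = (αhat - α) * ‖u‖ by ring, abs_mul, abs_norm]
  calc |a - b| ≤ |αhat - α| * ‖u‖ / ‖w‖ := by rw [← heq]; exact hlip
    _ ≤ |αhat - α| * ‖u‖ / δ := by gcongr
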